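/- There is a bijection between labelled binary trees with n leaves (n ≥ 2) and perfect matchings of {1,...,2n-2}; in particular the number of such trees is (2n-3)!!. -/

import Mathlib

/-- Plane binary trees with natural-number labels on the leaves. -/
inductive LTree where
  | leaf : ℕ → LTree
  | node : LTree → LTree → LTree

/-- The multiset of leaf labels of a tree. -/
def LTree.labels : LTree → Multiset ℕ
  | .leaf k => {k}
  | .node a b => a.labels + b.labels

/-- Two plane trees represent the same tree with unordered children. -/
inductive LTree.Flip : LTree → LTree → Prop
  | leaf (k : ℕ) : Flip (.leaf k) (.leaf k)
  | node {a a' b b' : LTree} : Flip a a' → Flip b b' → Flip (.node a b) (.node a' b')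
  | swap {a a' b b' : LTree} : Flip a a' → Flip b b' → Flip (.node a b) (.node b' a')

/-- Labelled binary trees with `n` leaves labelled bijectively by `{1,…,n}`, where each
internal vertex has two unordered children. -/
def LabTree (n : ℕ) : Type :=
  Quot (fun a b : {t : LTree // t.labels = (Finset.Icc 1 n).val} => LTree.Flip a.1 b.1)

/-- A perfect matching of `{1,…,m}`: a fixed-point free involution. -/
def Matching (m : ℕ) : Type :=
  {π : Equiv.Perm (Fin m) // ∀ i, π i ≠ i ∧ π (π i) = i}

namespace LTree

lemma labels_ne_zero : ∀ t : LTree, t.labels ≠ 0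
  | .leaf k => by simp [labels]
  | .node a b => by
      simp only [labels, ne_eq]
      intro h
      exact labels_ne_zero a (by
        have := congrArg Multiset.card h
        simp only [Multiset.card_add, Multiset.card_zero] at this
        exact Multiset.card_eq_zero.mp (by omega))

lemma card_labels_pos (t : LTree) : 0 < Multiset.card t.labels := by
  rcases Multiset.empty_or_exists_mem t.labels with h | ⟨x, hx⟩
  · exact absurd h t.labels_ne_zero
  · exact Multiset.card_pos_iff_exists_mem.2 ⟨x, hx⟩

lemma eq_leaf_of_card_eq_one : ∀ t : LTree, Multiset.card t.labels = 1 → ∃ k, t = leaf k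
  | .leaf k, _ => ⟨k, rfl⟩
  | .node a b, h => by
      simp only [labels, Multiset.card_add] at h
      have := a.card_labels_pos; have := b.card_labels_pos; omega

lemma Flip.rfl : ∀ t : LTree, Flip t t
  | .leaf k => .leaf k
  | .node a b => .node (Flip.rfl a) (Flip.rfl b)

lemma Flip.labels_eq {t t' : LTree} (h : Flip t t') : t.labels = t'.labels := by
  induction h with
  | leaf k => rfl
  | node h1 h2 ih1 ih2 => simp [labels, ih1, ih2]
  | swap h1 h2 ih1 ih2 => simp [labels, ih1, ih2, add_comm]

lemma Flip.leaf_inv {k : ℕ} {u : LTree} (h : LTree.Flip (LTree.leaf k) u) : u = LTree.leaf k := by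
  cases h; rfl

/-- The collection of label sets of all subtrees. -/
def subs : LTree → Finset (Multiset ℕ)
  | .leaf k => {({k} : Multiset ℕ)}
  | .node a b => insert (a.labels + b.labels) (subs a ∪ subs b)

lemma mem_subs_le : ∀ {t : LTree} {S : Multiset ℕ}, S ∈ subs t → S ≤ t.labels ∧ S ≠ 0
  | .leaf k, S, h => by
      simp only [subs, Finset.mem_singleton] at h
      subst h; simp [labels]
  | .node a b, S, h => by
      simp only [subs, Finset.mem_insert, Finset.mem_union] at h
      rcases h with h | h | h
      · subst h
        exact ⟨le_refl _, (node a b).labels_ne_zero⟩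
      · obtain ⟨h1, h2⟩ := mem_subs_le h
        exact ⟨h1.trans (by simp [labels]), h2⟩
      · obtain ⟨h1, h2⟩ := mem_subs_le h
        exact ⟨h1.trans (by simp [labels]), h2⟩

lemma self_mem_subs : ∀ t : LTree, t.labels ∈ subs t
  | .leaf k => by simp [subs, labels]
  | .node a b => by simp [subs, labels]

lemma nodup_node {a b : LTree} (h : (LTree.node a b).labels.Nodup) :
    a.labels.Nodup ∧ b.labels.Nodup ∧ Disjoint a.labels b.labels := by
  rw [show (LTree.node a b).labels = a.labels + b.labels from rfl, Multiset.nodup_add] at h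
  exact h

lemma not_le_of_mem_subs {a b : LTree} (hd : Disjoint a.labels b.labels)
    {S : Multiset ℕ} (hS : S ∈ subs b) : ¬ S ≤ a.labels := by
  intro hle
  obtain ⟨h1, h2⟩ := mem_subs_le hS
  obtain ⟨x, hx⟩ := Multiset.exists_mem_of_ne_zero h2
  exact Multiset.disjoint_left.mp hd (Multiset.mem_of_le hle hx) (Multiset.mem_of_le h1 hx)

lemma subs_disjoint {a b : LTree} (h : Disjoint a.labels b.labels) :
    Disjoint (subs a) (subs b) := by
  rw [Finset.disjoint_left]
  intro S hSa hSb
  exact not_le_of_mem_subs h hSb (mem_subs_le hSa).1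

lemma full_not_mem {a b : LTree} {S : Multiset ℕ} (hS : S ∈ subs a ∪ subs b) :
    S ≠ a.labels + b.labels := by
  intro h
  rw [Finset.mem_union] at hS
  rcases hS with hm | hm <;>
  · have h1 := (mem_subs_le hm).1
    have := Multiset.card_le_card h1
    rw [h, Multiset.card_add] at this
    have := a.card_labels_pos; have := b.card_labels_pos; omega

lemma card_subs : ∀ t : LTree, t.labels.Nodup → (subs t).card = 2 * Multiset.card t.labels - 1
  | .leaf k, _ => by simp [subs, labels]
  | .node a b, h => by
      obtain ⟨ha, hb, hd⟩ := nodup_node h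
      have hdisj := subs_disjoint hd
      have hnm : a.labels + b.labels ∉ subs a ∪ subs b := fun hmem => full_not_mem hmem rfl
      rw [show subs (node a b) = insert (a.labels + b.labels) (subs a ∪ subs b) from rfl,
        Finset.card_insert_of_notMem hnm, Finset.card_union_of_disjoint hdisj,
        card_subs a ha, card_subs b hb,
        show (node a b).labels = a.labels + b.labels from rfl, Multiset.card_add]
      have := a.card_labels_pos; have := b.card_labels_pos
      omega

lemma Flip.subs_eq {t t' : LTree} (h : Flip t t') : subs t = subs t' := by
  induction h with
  | leaf k => rfl
  | node h1 h2 ih1 ih2 =>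
      show insert _ _ = insert _ _
      rw [ih1, ih2, h1.labels_eq, h2.labels_eq]
  | swap h1 h2 ih1 ih2 =>
      show insert _ _ = insert _ _
      rw [ih1, ih2, h1.labels_eq, h2.labels_eq, add_comm, Finset.union_comm]

end LTree

namespace LTree

open Classical in
/-- Insert leaf `m` as a sibling of the subtree with label set `S`. -/
noncomputable def ins (m : ℕ) : LTree → Multiset ℕ → LTree
  | .leaf k, _ => .node (.leaf k) (.leaf m)
  | .node a b, S =>
      if S = a.labels + b.labels then .node (.node a b) (.leaf m)
      else if S ≤ a.labels then .node (ins m a S) b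
      else .node a (ins m b S)

open Classical in
/-- Delete the leaf `m`. -/
noncomputable def del (m : ℕ) : LTree → LTree
  | .leaf k => .leaf k
  | .node a b =>
      if a = .leaf m then b
      else if b = .leaf m then a
      else if m ∈ a.labels then .node (del m a) b
      else .node a (del m b)

open Classical in
/-- The label set of the sibling of leaf `m`. -/
noncomputable def sib (m : ℕ) : LTree → Multiset ℕ
  | .leaf _ => 0
  | .node a b =>
      if a = .leaf m then b.labels
      else if b = .leaf m then a.labels
      else if m ∈ a.labels then sib m a
      else sib m b

lemma labels_ins (m : ℕ) : ∀ (t : LTree) (S : Multiset ℕ),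
    (ins m t S).labels = t.labels + {m}
  | .leaf k, S => rfl
  | .node a b, S => by
      rw [ins]
      split
      · rfl
      · split
        · show (ins m a S).labels + b.labels = a.labels + b.labels + {m}
          rw [labels_ins m a S, add_right_comm]
        · show a.labels + (ins m b S).labels = a.labels + b.labels + {m}
          rw [labels_ins m b S, add_assoc]

lemma ins_ne_leaf (m : ℕ) (t : LTree) (S : Multiset ℕ) (k : ℕ) : ins m t S ≠ .leaf k := by
  cases t <;> (rw [ins]; try split) <;> try split
  all_goals simp

end LTree

namespace LTree

lemma Flip.leaf_inv' {k : ℕ} {u : LTree} (h : LTree.Flip u (LTree.leaf k)) : u = LTree.leaf k := by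
  cases h; rfl

lemma ins_full (m : ℕ) : ∀ t : LTree, ins m t t.labels = node t (leaf m)
  | .leaf k => rfl
  | .node a b => by rw [ins, if_pos (show (node a b).labels = a.labels + b.labels from rfl)]

/-- Decompose membership in `subs` of a node, assuming the relevant disjointness. -/
lemma mem_subs_node {a b : LTree} (hd : Disjoint a.labels b.labels) {S : Multiset ℕ}
    (hS : S ∈ subs (node a b)) :
    S = a.labels + b.labels ∨ (S ∈ subs a ∧ S ≤ a.labels ∧ ¬ S ≤ b.labels)
      ∨ (S ∈ subs b ∧ S ≤ b.labels ∧ ¬ S ≤ a.labels) := by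
  rw [show subs (node a b) = insert (a.labels + b.labels) (subs a ∪ subs b) from rfl,
    Finset.mem_insert, Finset.mem_union] at hS
  rcases hS with h | h | h
  · exact Or.inl h
  · exact Or.inr (Or.inl ⟨h, (mem_subs_le h).1, not_le_of_mem_subs hd.symm h⟩)
  · exact Or.inr (Or.inr ⟨h, (mem_subs_le h).1, not_le_of_mem_subs hd h⟩)

lemma del_ins (m : ℕ) : ∀ t : LTree, t.labels.Nodup → m ∉ t.labels →
    ∀ {S : Multiset ℕ}, S ∈ subs t → del m (ins m t S) = t ∧ sib m (ins m t S) = S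
  | .leaf k, _, hm, S, hS => by
      simp only [subs, Finset.mem_singleton] at hS
      have hk : k ≠ m := fun h => by simp [labels, h] at hm
      subst hS
      constructor
      · rw [ins, del, if_neg (by simp [hk]), if_pos rfl]
      · rw [ins, sib, if_neg (by simp [hk]), if_pos rfl]
        rfl
  | .node a b, hnd, hm, S, hS => by
      obtain ⟨ha, hb, hd⟩ := nodup_node hnd
      have hma : m ∉ a.labels := fun h => hm (by simp [labels, h])
      have hmb : m ∉ b.labels := fun h => hm (by simp [labels, h])
      have hbm : b ≠ leaf m := by rintro rfl; exact hmb (by simp [labels])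
      have ham : a ≠ leaf m := by rintro rfl; exact hma (by simp [labels])
      rcases mem_subs_node hd hS with h | ⟨h, hle, hnle⟩ | ⟨h, hle, hnle⟩
      · subst h
        constructor
        · rw [ins, if_pos rfl, del, if_neg (by simp), if_pos rfl]
        · rw [ins, if_pos rfl, sib, if_neg (by simp), if_pos rfl]
          rfl
      · have hfull : S ≠ a.labels + b.labels := full_not_mem (by
          rw [Finset.mem_union]; exact Or.inl h)
        obtain ⟨ih1, ih2⟩ := del_ins m a ha hma h
        have hmem : m ∈ (ins m a S).labels := by rw [labels_ins]; simp
        constructor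
        · rw [ins, if_neg hfull, if_pos hle, del, if_neg (ins_ne_leaf m a S m),
            if_neg hbm, if_pos hmem, ih1]
        · rw [ins, if_neg hfull, if_pos hle, sib, if_neg (ins_ne_leaf m a S m),
            if_neg hbm, if_pos hmem, ih2]
      · have hfull : S ≠ a.labels + b.labels := full_not_mem (by
          rw [Finset.mem_union]; exact Or.inr h)
        obtain ⟨ih1, ih2⟩ := del_ins m b hb hmb h
        constructor
        · rw [ins, if_neg hfull, if_neg hnle, del, if_neg ham,
            if_neg (ins_ne_leaf m b S m), if_neg hma, ih1]
        · rw [ins, if_neg hfull, if_neg hnle, sib, if_neg ham,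
            if_neg (ins_ne_leaf m b S m), if_neg hma, ih2]

end LTree

namespace LTree

lemma labels_del_sib (m : ℕ) : ∀ t : LTree, t.labels.Nodup → m ∈ t.labels →
    (∀ k, t ≠ leaf k) →
    (del m t).labels + {m} = t.labels ∧ sib m t ∈ subs (del m t)
  | .leaf k, _, _, hk => absurd rfl (hk k)
  | .node a b, hnd, hm, _ => by
      obtain ⟨ha, hb, hd⟩ := nodup_node hnd
      by_cases ham : a = leaf m
      · subst ham
        rw [del, if_pos rfl, sib, if_pos rfl]
        refine ⟨?_, self_mem_subs b⟩
        show b.labels + {m} = ({m} : Multiset ℕ) + b.labels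
        rw [add_comm]
      by_cases hbm : b = leaf m
      · subst hbm
        rw [del, if_neg ham, if_pos rfl, sib, if_neg ham, if_pos rfl]
        exact ⟨rfl, self_mem_subs a⟩
      by_cases hma : m ∈ a.labels
      · have hal : ∀ k, a ≠ leaf k := by
          rintro k rfl
          simp only [labels, Multiset.mem_singleton] at hma
          exact ham (by rw [hma])
        obtain ⟨ih1, ih2⟩ := labels_del_sib m a ha hma hal
        rw [del, if_neg ham, if_neg hbm, if_pos hma, sib, if_neg ham, if_neg hbm, if_pos hma]
        constructor
        · show (del m a).labels + b.labels + {m} = a.labels + b.labels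
          rw [add_right_comm, ih1]
        · show sib m a ∈ insert _ (subs (del m a) ∪ subs b)
          rw [Finset.mem_insert, Finset.mem_union]
          exact Or.inr (Or.inl ih2)
      · have hmb : m ∈ b.labels := by
          have : m ∈ a.labels + b.labels := hm
          rw [Multiset.mem_add] at this
          tauto
        have hbl : ∀ k, b ≠ leaf k := by
          rintro k rfl
          simp only [labels, Multiset.mem_singleton] at hmb
          exact hbm (by rw [hmb])
        obtain ⟨ih1, ih2⟩ := labels_del_sib m b hb hmb hbl
        rw [del, if_neg ham, if_neg hbm, if_neg hma, sib, if_neg ham, if_neg hbm, if_neg hma]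
        constructor
        · show a.labels + (del m b).labels + {m} = a.labels + b.labels
          rw [add_assoc, ih1]
        · show sib m b ∈ insert _ (subs a ∪ subs (del m b))
          rw [Finset.mem_insert, Finset.mem_union]
          exact Or.inr (Or.inr ih2)

lemma labels_del_le {m : ℕ} {t : LTree} (hnd : t.labels.Nodup) (hm : m ∈ t.labels)
    (hl : ∀ k, t ≠ leaf k) : (del m t).labels ≤ t.labels := by
  have := (labels_del_sib m t hnd hm hl).1
  calc (del m t).labels ≤ (del m t).labels + {m} := Multiset.le_add_right _ _
    _ = t.labels := this

lemma ins_del_flip (m : ℕ) : ∀ t : LTree, t.labels.Nodup → m ∈ t.labels →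
    (∀ k, t ≠ leaf k) → Flip (ins m (del m t) (sib m t)) t
  | .leaf k, _, _, hk => absurd rfl (hk k)
  | .node a b, hnd, hm, _ => by
      obtain ⟨ha, hb, hd⟩ := nodup_node hnd
      by_cases ham : a = leaf m
      · subst ham
        rw [del, if_pos rfl, sib, if_pos rfl, ins_full]
        exact Flip.swap (Flip.rfl b) (Flip.rfl _)
      by_cases hbm : b = leaf m
      · subst hbm
        rw [del, if_neg ham, if_pos rfl, sib, if_neg ham, if_pos rfl, ins_full]
        exact Flip.rfl _
      by_cases hma : m ∈ a.labels
      · have hal : ∀ k, a ≠ leaf k := by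
          rintro k rfl
          simp only [labels, Multiset.mem_singleton] at hma
          exact ham (by rw [hma])
        obtain ⟨hlab, hsub⟩ := labels_del_sib m a ha hma hal
        have hsle : sib m a ≤ (del m a).labels := (mem_subs_le hsub).1
        rw [del, if_neg ham, if_neg hbm, if_pos hma, sib, if_neg ham, if_neg hbm, if_pos hma]
        have hne : sib m a ≠ (del m a).labels + b.labels := by
          intro h
          have := Multiset.card_le_card hsle
          have h2 := congrArg Multiset.card h
          simp only [Multiset.card_add] at h2
          have := b.card_labels_pos
          omega
        rw [ins, if_neg hne, if_pos hsle]
        exact Flip.node (ins_del_flip m a ha hma hal) (Flip.rfl b)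
      · have hmb : m ∈ b.labels := by
          have : m ∈ a.labels + b.labels := hm
          rw [Multiset.mem_add] at this
          tauto
        have hbl : ∀ k, b ≠ leaf k := by
          rintro k rfl
          simp only [labels, Multiset.mem_singleton] at hmb
          exact hbm (by rw [hmb])
        obtain ⟨hlab, hsub⟩ := labels_del_sib m b hb hmb hbl
        have hsle : sib m b ≤ (del m b).labels := (mem_subs_le hsub).1
        have hsne : sib m b ≠ 0 := (mem_subs_le hsub).2
        rw [del, if_neg ham, if_neg hbm, if_neg hma, sib, if_neg ham, if_neg hbm, if_neg hma]
        have hne : sib m b ≠ a.labels + (del m b).labels := by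
          intro h
          have := Multiset.card_le_card hsle
          have h2 := congrArg Multiset.card h
          simp only [Multiset.card_add] at h2
          have := a.card_labels_pos
          omega
        have hnle : ¬ sib m b ≤ a.labels := by
          intro hle
          obtain ⟨x, hx⟩ := Multiset.exists_mem_of_ne_zero hsne
          have hxb : x ∈ b.labels :=
            Multiset.mem_of_le ((hsle.trans (labels_del_le hb hmb hbl))) hx
          exact Multiset.disjoint_left.mp hd (Multiset.mem_of_le hle hx) hxb
        rw [ins, if_neg hne, if_neg hnle]
        exact Flip.node (Flip.rfl a) (ins_del_flip m b hb hmb hbl)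

end LTree

namespace LTree

lemma ins_congr (m : ℕ) {t t' : LTree} (h : Flip t t') :
    t.labels.Nodup → ∀ {S : Multiset ℕ}, S ∈ subs t → Flip (ins m t S) (ins m t' S) := by
  induction h with
  | leaf k => exact fun _ _ _ => Flip.rfl _
  | @node a a' b b' h1 h2 ih1 ih2 =>
      intro hnd S hS
      obtain ⟨ha, hb, hd⟩ := nodup_node hnd
      have e1 := h1.labels_eq
      have e2 := h2.labels_eq
      rcases mem_subs_node hd hS with h | ⟨h, hle, hnle⟩ | ⟨h, hle, hnle⟩
      · subst h
        rw [ins, if_pos rfl, ins, if_pos (by rw [e1, e2])]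
        exact Flip.node (Flip.node h1 h2) (Flip.rfl _)
      · rw [ins, if_neg (full_not_mem (Finset.mem_union_left _ h)),
          if_pos hle, ins, if_neg (by rw [← e1, ← e2]; exact full_not_mem (Finset.mem_union_left _ h)),
          if_pos (e1 ▸ hle)]
        exact Flip.node (ih1 ha h) h2
      · rw [ins, if_neg (full_not_mem (Finset.mem_union_right _ h)),
          if_neg hnle, ins, if_neg (by rw [← e1, ← e2]; exact full_not_mem (Finset.mem_union_right _ h)),
          if_neg (e1 ▸ hnle)]
        exact Flip.node h1 (ih2 hb h)
  | @swap a a' b b' h1 h2 ih1 ih2 =>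
      intro hnd S hS
      obtain ⟨ha, hb, hd⟩ := nodup_node hnd
      have e1 := h1.labels_eq
      have e2 := h2.labels_eq
      rcases mem_subs_node hd hS with h | ⟨h, hle, hnle⟩ | ⟨h, hle, hnle⟩
      · subst h
        rw [ins, if_pos rfl, ins, if_pos (by rw [← e1, ← e2, add_comm])]
        exact Flip.node (Flip.swap h1 h2) (Flip.rfl _)
      · rw [ins, if_neg (full_not_mem (Finset.mem_union_left _ h)), if_pos hle,
          ins, if_neg (by rw [← e1, ← e2, add_comm]; exact full_not_mem (Finset.mem_union_left _ h)),
          if_neg (e2 ▸ hnle)]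
        exact Flip.swap (ih1 ha h) h2
      · rw [ins, if_neg (full_not_mem (Finset.mem_union_right _ h)), if_neg hnle,
          ins, if_neg (by rw [← e1, ← e2, add_comm]; exact full_not_mem (Finset.mem_union_right _ h)),
          if_pos (e2 ▸ hle)]
        exact Flip.swap h1 (ih2 hb h)

lemma del_congr (m : ℕ) {t t' : LTree} (h : Flip t t') :
    t.labels.Nodup → m ∈ t.labels →
    Flip (del m t) (del m t') ∧ sib m t = sib m t' := by
  induction h with
  | leaf k => exact fun _ _ => ⟨Flip.rfl _, rfl⟩
  | @node a a' b b' h1 h2 ih1 ih2 =>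
      intro hnd hm
      obtain ⟨ha, hb, hd⟩ := nodup_node hnd
      have e1 := h1.labels_eq
      have e2 := h2.labels_eq
      by_cases ham : a = leaf m
      · have ham' : a' = leaf m := by subst ham; exact h1.leaf_inv
        rw [del, if_pos ham, del, if_pos ham', sib, if_pos ham, sib, if_pos ham']
        exact ⟨h2, e2⟩
      · have ham' : a' ≠ leaf m := fun hh => ham (hh ▸ h1).leaf_inv'
        by_cases hbm : b = leaf m
        · have hbm' : b' = leaf m := by subst hbm; exact h2.leaf_inv
          rw [del, if_neg ham, if_pos hbm, del, if_neg ham', if_pos hbm',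
            sib, if_neg ham, if_pos hbm, sib, if_neg ham', if_pos hbm']
          exact ⟨h1, e1⟩
        · have hbm' : b' ≠ leaf m := fun hh => hbm (hh ▸ h2).leaf_inv'
          by_cases hma : m ∈ a.labels
          · obtain ⟨f, s⟩ := ih1 ha hma
            rw [del, if_neg ham, if_neg hbm, if_pos hma,
              del, if_neg ham', if_neg hbm', if_pos (e1 ▸ hma),
              sib, if_neg ham, if_neg hbm, if_pos hma,
              sib, if_neg ham', if_neg hbm', if_pos (e1 ▸ hma)]
            exact ⟨Flip.node f h2, s⟩
          · have hmb : m ∈ b.labels := by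
              have : m ∈ a.labels + b.labels := hm
              rw [Multiset.mem_add] at this; tauto
            obtain ⟨f, s⟩ := ih2 hb hmb
            rw [del, if_neg ham, if_neg hbm, if_neg hma,
              del, if_neg ham', if_neg hbm', if_neg (e1 ▸ hma),
              sib, if_neg ham, if_neg hbm, if_neg hma,
              sib, if_neg ham', if_neg hbm', if_neg (e1 ▸ hma)]
            exact ⟨Flip.node h1 f, s⟩
  | @swap a a' b b' h1 h2 ih1 ih2 =>
      intro hnd hm
      obtain ⟨ha, hb, hd⟩ := nodup_node hnd
      have e1 := h1.labels_eq
      have e2 := h2.labels_eq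
      by_cases ham : a = leaf m
      · have ham' : a' = leaf m := by subst ham; exact h1.leaf_inv
        have hma : m ∈ a.labels := by subst ham; simp [labels]
        have hbm' : b' ≠ leaf m := by
          rintro rfl
          have : m ∈ b.labels := by rw [e2]; simp [labels]
          exact Multiset.disjoint_left.mp hd hma this
        rw [del, if_pos ham, del, if_neg hbm', if_pos ham',
          sib, if_pos ham, sib, if_neg hbm', if_pos ham']
        exact ⟨h2, e2⟩
      · have ham' : a' ≠ leaf m := fun hh => ham (hh ▸ h1).leaf_inv'
        by_cases hbm : b = leaf m
        · have hbm' : b' = leaf m := by subst hbm; exact h2.leaf_inv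
          rw [del, if_neg ham, if_pos hbm, del, if_pos hbm',
            sib, if_neg ham, if_pos hbm, sib, if_pos hbm']
          exact ⟨h1, e1⟩
        · have hbm' : b' ≠ leaf m := fun hh => hbm (hh ▸ h2).leaf_inv'
          by_cases hma : m ∈ a.labels
          · obtain ⟨f, s⟩ := ih1 ha hma
            have hmb' : m ∉ b'.labels := by
              rw [← e2]
              exact fun hh => Multiset.disjoint_left.mp hd hma hh
            rw [del, if_neg ham, if_neg hbm, if_pos hma,
              del, if_neg hbm', if_neg ham', if_neg hmb',
              sib, if_neg ham, if_neg hbm, if_pos hma,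
              sib, if_neg hbm', if_neg ham', if_neg hmb']
            exact ⟨Flip.swap f h2, s⟩
          · have hmb : m ∈ b.labels := by
              have : m ∈ a.labels + b.labels := hm
              rw [Multiset.mem_add] at this; tauto
            obtain ⟨f, s⟩ := ih2 hb hmb
            rw [del, if_neg ham, if_neg hbm, if_neg hma,
              del, if_neg hbm', if_neg ham', if_pos (e2 ▸ hmb),
              sib, if_neg ham, if_neg hbm, if_neg hma,
              sib, if_neg hbm', if_neg ham', if_pos (e2 ▸ hmb)]
            exact ⟨Flip.swap h1 f, s⟩

end LTree

namespace LTree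

/-- A "comb" tree with labels `{1, …, k+1}`. -/
def comb : ℕ → LTree
  | 0 => leaf 1
  | (k+1) => node (comb k) (leaf (k+2))

lemma icc_succ_val (n : ℕ) :
    ((Finset.Icc 1 (n+1)).val : Multiset ℕ) = (Finset.Icc 1 n).val + {n+1} := by
  have h1 : Finset.Icc 1 (n+1) = insert (n+1) (Finset.Icc 1 n) := by
    ext x; simp [Finset.mem_Icc]; omega
  have h2 : n + 1 ∉ Finset.Icc 1 n := by simp
  rw [h1, Finset.insert_val_of_notMem h2, add_comm (Finset.Icc 1 n).val,
    Multiset.singleton_add]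

lemma comb_labels : ∀ k : ℕ, (comb k).labels = (Finset.Icc 1 (k+1)).val
  | 0 => by decide
  | (k+1) => by
      show (comb k).labels + (leaf (k+3-1)).labels = _
      rw [comb_labels k, icc_succ_val (k+1)]
      rfl

end LTree

section TreeCount

open LTree

/-- Label sets of subtrees, on the quotient. -/
def subsQ (n : ℕ) : LabTree n → Finset (Multiset ℕ) :=
  Quot.lift (fun t => subs t.1) (fun _ _ h => h.subs_eq)

lemma labTree_sigma_ext {n : ℕ} {q q' : LabTree n} (h : q = q')
    {S S' : Multiset ℕ} {hS : S ∈ subsQ n q} {hS' : S' ∈ subsQ n q'} (h2 : S = S') :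
    (⟨q, S, hS⟩ : Σ q : LabTree n, {S : Multiset ℕ // S ∈ subsQ n q}) = ⟨q', S', hS'⟩ := by
  subst h; subst h2; rfl

variable {n : ℕ}

lemma labels_nodup {m : ℕ} (t : {t : LTree // t.labels = (Finset.Icc 1 m).val}) :
    t.1.labels.Nodup := by
  rw [t.2]; exact (Finset.Icc 1 m).nodup

lemma mem_labels_succ (t : {t : LTree // t.labels = (Finset.Icc 1 (n+1)).val}) :
    n + 1 ∈ t.1.labels := by
  rw [t.2]; rw [Finset.mem_val, Finset.mem_Icc]; omega

lemma not_mem_labels (t : {t : LTree // t.labels = (Finset.Icc 1 n).val}) :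
    n + 1 ∉ t.1.labels := by
  rw [t.2, Finset.mem_val, Finset.mem_Icc]; omega

lemma not_leaf_succ (hn : 1 ≤ n) (t : {t : LTree // t.labels = (Finset.Icc 1 (n+1)).val}) :
    ∀ k, t.1 ≠ leaf k := by
  intro k hk
  have : Multiset.card t.1.labels = n + 1 := by rw [t.2]; simp
  rw [hk] at this
  simp only [labels, Multiset.card_singleton] at this
  omega

lemma labels_del_eq (hn : 1 ≤ n) (t : {t : LTree // t.labels = (Finset.Icc 1 (n+1)).val}) :
    (del (n+1) t.1).labels = (Finset.Icc 1 n).val := by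
  have h := (labels_del_sib (n+1) t.1 (labels_nodup t) (mem_labels_succ t) (not_leaf_succ hn t)).1
  have h2 : (del (n+1) t.1).labels + {n+1} = (Finset.Icc 1 n).val + {n+1} := by
    rw [h, t.2, icc_succ_val]
  exact add_right_cancel h2

/-- Delete the leaf `n+1`, on the quotient level. -/
noncomputable def delQ (hn : 1 ≤ n) :
    LabTree (n+1) → Σ q : LabTree n, {S : Multiset ℕ // S ∈ subsQ n q} :=
  Quot.lift
    (fun t => ⟨Quot.mk _ ⟨del (n+1) t.1, labels_del_eq hn t⟩, sib (n+1) t.1,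
      (labels_del_sib (n+1) t.1 (labels_nodup t) (mem_labels_succ t) (not_leaf_succ hn t)).2⟩)
    (by
      intro a b h
      have hc := del_congr (n+1) h (labels_nodup a) (mem_labels_succ a)
      exact labTree_sigma_ext (Quot.sound hc.1) hc.2)

/-- Insert the leaf `n+1` as a sibling of the subtree with label set `S`, on the quotient. -/
noncomputable def insQ (S : Multiset ℕ) : LabTree n → LabTree (n+1) :=
  Quot.lift
    (fun t =>
      if hS : S ∈ subs t.1 then
        Quot.mk _ ⟨ins (n+1) t.1 S, by
          rw [labels_ins, t.2, icc_succ_val]⟩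
      else Quot.mk _ ⟨comb n, comb_labels n⟩)
    (by
      intro a b h
      by_cases hS : S ∈ subs a.1
      · have hS' : S ∈ subs b.1 := h.subs_eq ▸ hS
        refine (dif_pos hS).trans (Eq.trans ?_ (dif_pos hS').symm)
        exact Quot.sound (ins_congr (n+1) h (labels_nodup a) hS)
      · have hS' : S ∉ subs b.1 := h.subs_eq ▸ hS
        refine (dif_neg hS).trans (Eq.trans ?_ (dif_neg hS').symm)
        rfl)

noncomputable def labTreeEquiv (hn : 1 ≤ n) :
    LabTree (n+1) ≃ Σ q : LabTree n, {S : Multiset ℕ // S ∈ subsQ n q} where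
  toFun := delQ hn
  invFun x := insQ x.2.1 x.1
  left_inv := by
    apply Quot.ind
    intro t
    show insQ (sib (n+1) t.1) (Quot.mk _ ⟨del (n+1) t.1, _⟩) = Quot.mk _ t
    have hmem := (labels_del_sib (n+1) t.1 (labels_nodup t) (mem_labels_succ t)
      (not_leaf_succ hn t)).2
    show dite _ _ _ = _
    refine (dif_pos hmem).trans ?_
    exact Quot.sound (ins_del_flip (n+1) t.1 (labels_nodup t) (mem_labels_succ t)
      (not_leaf_succ hn t))
  right_inv := by
    rintro ⟨q, S, hS⟩
    induction q using Quot.ind with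
    | _ t =>
      have hS' : S ∈ subs t.1 := hS
      show delQ hn (insQ S (Quot.mk _ t)) = _
      show delQ hn (dite _ _ _) = _
      refine (congrArg (delQ hn) (dif_pos hS')).trans ?_
      obtain ⟨h1, h2⟩ := del_ins (n+1) t.1 (labels_nodup t) (not_mem_labels t) hS'
      exact labTree_sigma_ext (congrArg (Quot.mk _) (Subtype.ext h1)) h2

end TreeCount

section TreeCount2

open LTree

lemma card_subsQ (n : ℕ) (q : LabTree n) : (subsQ n q).card = 2 * n - 1 := by
  induction q using Quot.ind with
  | _ t =>
    show (subs t.1).card = _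
    rw [card_subs t.1 (labels_nodup t), t.2]
    have h : (Finset.Icc 1 n).card = n + 1 - 1 := Nat.card_Icc 1 n
    rw [Finset.card] at h
    rw [h]
    omega

lemma labTree_one : Subsingleton (LabTree 1) ∧ Nonempty (LabTree 1) := by
  constructor
  · constructor
    apply Quot.ind; intro a; apply Quot.ind; intro b
    have key : ∀ t : {t : LTree // t.labels = (Finset.Icc 1 1).val}, t.1 = leaf 1 := by
      intro t
      have hc : Multiset.card t.1.labels = 1 := by rw [t.2]; decide
      obtain ⟨k, hk⟩ := eq_leaf_of_card_eq_one t.1 hc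
      have : ({k} : Multiset ℕ) = {1} := by
        have := t.2; rw [hk] at this; simpa [labels] using this
      rw [hk, Multiset.singleton_inj.mp this]
    have : a = b := Subtype.ext ((key a).trans (key b).symm)
    rw [this]
  · exact ⟨Quot.mk _ ⟨leaf 1, by decide⟩⟩

lemma labTree_card : ∀ n : ℕ, 1 ≤ n →
    Finite (LabTree n) ∧ Nat.card (LabTree n) = Nat.doubleFactorial (2 * n - 3)
  | 1, _ => by
      obtain ⟨hs, hne⟩ := labTree_one
      haveI := hs; haveI := hne
      refine ⟨Finite.of_subsingleton, ?_⟩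
      rw [Nat.card_eq_one_iff_unique.mpr ⟨hs, hne⟩]
      rfl
  | (n+2), _ => by
      obtain ⟨hfin, hcard⟩ := labTree_card (n+1) (by omega)
      haveI := hfin
      haveI : Fintype (LabTree (n+1)) := Fintype.ofFinite _
      have e := labTreeEquiv (n := n+1) (by omega)
      constructor
      · exact Finite.of_equiv _ e.symm
      · rw [Nat.card_congr e, Nat.card_eq_fintype_card, Fintype.card_sigma]
        have hfib : ∀ q : LabTree (n+1), Fintype.card {S : Multiset ℕ // S ∈ subsQ (n+1) q}
            = 2 * (n+1) - 1 := by
          intro q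
          rw [Fintype.card_coe]
          exact card_subsQ (n+1) q
        rw [Finset.sum_congr rfl (fun q _ => hfib q), Finset.sum_const, smul_eq_mul]
        rw [show Finset.univ.card = Fintype.card (LabTree (n+1)) from rfl,
          ← Nat.card_eq_fintype_card (α := LabTree (n+1))]
        have harith : 2 * (n + 2) - 3 = (2 * (n+1) - 3) + 2 ∨ n = 0 := by omega
        rcases harith with h | h
        · rw [h, Nat.doubleFactorial_add_two, hcard]
          have : 2 * (n + 1) - 3 + 2 = 2 * (n+1) - 1 := by omega
          rw [this, mul_comm (2 * (n+1) - 1)]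
        · subst h
          rw [hcard]
          norm_num [Nat.doubleFactorial]

end TreeCount2

namespace MatchingCount

variable {k : ℕ}

/-- The pair `{a₀.castSucc, last}` as a predicate. -/
def P (a₀ : Fin (k+1)) (x : Fin (k+2)) : Prop := x = a₀.castSucc ∨ x = Fin.last (k+1)

instance (a₀ : Fin (k+1)) : DecidablePred (P a₀) := fun x => by unfold P; infer_instance

lemma castSucc_ne_last (a₀ : Fin (k+1)) : a₀.castSucc ≠ Fin.last (k+1) :=
  (Fin.castSucc_lt_last _).ne

/-- The complement of the pair `{a₀.castSucc, last}` in `Fin (k+2)`, as a copy of `Fin k`. -/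
def c (a₀ : Fin (k+1)) : Fin k ≃ {x : Fin (k+2) // ¬ P a₀ x} := by
  refine Equiv.trans (finSuccAboveEquiv a₀) (Equiv.trans ?e2 (Equiv.trans
    (Equiv.subtypeSubtypeEquivSubtypeInter
      (fun x : Fin (k+2) => x ≠ Fin.last (k+1)) (fun x => x ≠ a₀.castSucc))
    (Equiv.subtypeEquivRight (q := fun x => ¬ P a₀ x) ?e4)))
  case e2 =>
    refine (finSuccAboveEquiv (Fin.last (k+1))).subtypeEquiv
      (p := fun y => y ≠ a₀) (q := fun x => x.1 ≠ a₀.castSucc) (fun y => ?_)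
    show y ≠ a₀ ↔ ((finSuccAboveEquiv (Fin.last (k+1))) y : Fin (k+2)) ≠ a₀.castSucc
    have hv : ((finSuccAboveEquiv (Fin.last (k+1))) y : Fin (k+2)) = y.castSucc := by
      simp [finSuccAboveEquiv_apply, Fin.succAbove_last]
    rw [hv, not_iff_not]
    exact ⟨fun h => h ▸ rfl, fun h => Fin.castSucc_injective _ h⟩
  case e4 =>
    intro x
    show _ ↔ ¬(x = a₀.castSucc ∨ x = Fin.last (k+1))
    rw [not_or]
    tauto

end MatchingCount

namespace MatchingCount

variable {k : ℕ}

lemma pi_last_ne (π : Matching (k+2)) : π.1 (Fin.last (k+1)) ≠ Fin.last (k+1) :=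
  (π.2 _).1

/-- The partner of the last element. -/
def a0 (π : Matching (k+2)) : Fin (k+1) := (π.1 (Fin.last (k+1))).castPred (pi_last_ne π)

lemma a0_spec (π : Matching (k+2)) : (a0 π).castSucc = π.1 (Fin.last (k+1)) :=
  Fin.castSucc_castPred _ _

lemma pi_a (π : Matching (k+2)) : π.1 ((a0 π).castSucc) = Fin.last (k+1) := by
  rw [a0_spec]; exact (π.2 _).2

lemma invariant (π : Matching (k+2)) :
    ∀ x, ¬ P (a0 π) x ↔ ¬ P (a0 π) (π.1 x) := by
  intro x
  rw [not_iff_not]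
  constructor
  · rintro (h | h)
    · subst h; right; exact pi_a π
    · subst h; left; exact (a0_spec π).symm
  · rintro (h | h)
    · right
      have := congrArg π.1 h
      rw [(π.2 x).2, a0_spec] at this
      rw [this, (π.2 _).2]
    · left
      have := congrArg π.1 h
      rw [(π.2 x).2, ← a0_spec] at this
      exact this

/-- The induced matching on the remaining `k` points. -/
def fwdPerm (π : Matching (k+2)) : Equiv.Perm (Fin k) :=
  ((c (a0 π)).symm).permCongr (π.1.subtypePerm (fun x => (invariant π x).symm))

lemma fwdPerm_apply (π : Matching (k+2)) (i : Fin k) :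
    ((c (a0 π)) (fwdPerm π i)).1 = π.1 ((c (a0 π)) i).1 := by
  simp [fwdPerm, Equiv.permCongr_apply]

/-- Forward map of the main equivalence. -/
def fwd (π : Matching (k+2)) : Fin (k+1) × Matching k :=
  (a0 π, ⟨fwdPerm π, by
    intro i
    constructor
    · intro h
      have h2 := fwdPerm_apply π i
      rw [h] at h2
      exact (π.2 ((c (a0 π)) i).1).1 h2.symm
    · have h2 := fwdPerm_apply π (fwdPerm π i)
      rw [fwdPerm_apply π i, (π.2 _).2] at h2
      have h3 : (c (a0 π)) (fwdPerm π (fwdPerm π i)) = (c (a0 π)) i := Subtype.ext h2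
      exact (c (a0 π)).injective h3⟩)

/-- Backward map of the main equivalence. -/
def bwd (x : Fin (k+1) × Matching k) : Equiv.Perm (Fin (k+2)) :=
  Equiv.Perm.subtypeCongr
    (Equiv.swap (⟨x.1.castSucc, Or.inl rfl⟩ : {y : Fin (k+2) // P x.1 y})
      ⟨Fin.last (k+1), Or.inr rfl⟩)
    ((c x.1).permCongr x.2.1)

lemma bwd_a (x : Fin (k+1) × Matching k) : bwd x x.1.castSucc = Fin.last (k+1) := by
  have h0 := Equiv.Perm.subtypeCongr.left_apply (p := P x.1)
    (Equiv.swap (⟨x.1.castSucc, Or.inl rfl⟩ : {y : Fin (k+2) // P x.1 y})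
      ⟨Fin.last (k+1), Or.inr rfl⟩)
    ((c x.1).permCongr x.2.1) (Or.inl rfl : P x.1 x.1.castSucc)
  rw [bwd, h0, Equiv.swap_apply_left]

lemma bwd_last (x : Fin (k+1) × Matching k) : bwd x (Fin.last (k+1)) = x.1.castSucc := by
  have h0 := Equiv.Perm.subtypeCongr.left_apply (p := P x.1)
    (Equiv.swap (⟨x.1.castSucc, Or.inl rfl⟩ : {y : Fin (k+2) // P x.1 y})
      ⟨Fin.last (k+1), Or.inr rfl⟩)
    ((c x.1).permCongr x.2.1) (Or.inr rfl : P x.1 (Fin.last (k+1)))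
  rw [bwd, h0, Equiv.swap_apply_right]

lemma bwd_not_P (x : Fin (k+1) × Matching k) {y : Fin (k+2)} (hy : ¬ P x.1 y) :
    bwd x y = ((c x.1) (x.2.1 ((c x.1).symm ⟨y, hy⟩))).1 := by
  rw [bwd, Equiv.Perm.subtypeCongr.right_apply _ _ hy]
  simp [Equiv.permCongr_apply]

lemma bwd_matching (x : Fin (k+1) × Matching k) : ∀ i, bwd x i ≠ i ∧ bwd x (bwd x i) = i := by
  intro i
  by_cases hi : P x.1 i
  · rcases hi with h | h
    · subst h
      rw [bwd_a]
      exact ⟨(castSucc_ne_last x.1).symm, bwd_last x⟩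
    · subst h
      rw [bwd_last]
      exact ⟨castSucc_ne_last x.1, bwd_a x⟩
  · rw [bwd_not_P x hi]
    set z := (c x.1).symm ⟨i, hi⟩ with hz
    have hci : (c x.1) z = ⟨i, hi⟩ := by rw [hz]; simp
    constructor
    · intro h
      have : (c x.1) (x.2.1 z) = ⟨i, hi⟩ := Subtype.ext h
      rw [← hci] at this
      exact (x.2.2 z).1 ((c x.1).injective this)
    · have hnp : ¬ P x.1 ((c x.1) (x.2.1 z)).1 := ((c x.1) (x.2.1 z)).2
      rw [bwd_not_P x hnp]
      have : ((c x.1).symm ⟨((c x.1) (x.2.1 z)).1, hnp⟩) = x.2.1 z := by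
        simp
      rw [this, (x.2.2 z).2, hci]

/-- The recursive structure of matchings. -/
def matchingEquiv : Matching (k+2) ≃ Fin (k+1) × Matching k where
  toFun := fwd
  invFun x := ⟨bwd x, bwd_matching x⟩
  left_inv := by
    intro π
    apply Subtype.ext
    apply Equiv.ext
    intro y
    show bwd (fwd π) y = π.1 y
    have hfst : (fwd π).1 = a0 π := rfl
    by_cases hy : P (a0 π) y
    · rcases hy with h | h
      · subst h
        rw [pi_a π]
        exact bwd_a (fwd π)
      · subst h
        rw [bwd_last, hfst, a0_spec]
    · rw [bwd_not_P _ (show ¬ P (fwd π).1 y from hy)]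
      show ((c (a0 π)) (fwdPerm π ((c (a0 π)).symm ⟨y, hy⟩))).1 = π.1 y
      rw [fwdPerm_apply]
      simp
  right_inv := by
    rintro ⟨a₀, σ⟩
    set π : Matching (k+2) := ⟨bwd (a₀, σ), bwd_matching _⟩ with hπ
    have h1 : a0 π = a₀ := by
      have : π.1 (Fin.last (k+1)) = a₀.castSucc := bwd_last (a₀, σ)
      rw [a0]
      simp only [this]
      exact Fin.castPred_castSucc _
    have h2 : fwdPerm π = σ.1 := by
      apply Equiv.ext
      intro i
      have happ := fwdPerm_apply π i
      have hc : ∀ j : Fin k, ((c (a0 π)) j : Fin (k+2)) = ((c a₀) j : Fin (k+2)) := by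
        rw [h1]; intro j; rfl
      -- π.1 on the complement acts as σ through c
      have hnp : ¬ P a₀ ((c a₀) i).1 := ((c a₀) i).2
      have hval : π.1 ((c a₀) i).1 = ((c a₀) (σ.1 ((c a₀).symm ⟨((c a₀) i).1, hnp⟩))).1 :=
        bwd_not_P (a₀, σ) hnp
      have heta : ((c a₀).symm ⟨((c a₀) i).1, hnp⟩) = i := by
        have : (⟨((c a₀) i).1, hnp⟩ : {x : Fin (k+2) // ¬ P a₀ x}) = (c a₀) i :=
          Subtype.ext rfl
        rw [this]; simp
      rw [heta] at hval
      -- combine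
      have : ((c (a0 π)) (fwdPerm π i)).1 = ((c a₀) (σ.1 i)).1 := by
        rw [happ, hc i, hval]
      rw [h1] at this
      exact (c a₀).injective (Subtype.ext this)
    apply Prod.ext
    · exact h1
    · exact Subtype.ext h2

end MatchingCount

namespace MatchingCount

instance matchingFinite (m : ℕ) : Finite (Matching m) := Subtype.finite

lemma matching_zero_card : Nat.card (Matching 0) = 1 := by
  rw [Nat.card_eq_one_iff_unique]
  constructor
  · constructor
    intro a b
    apply Subtype.ext
    apply Equiv.ext
    intro i
    exact i.elim0
  · exact ⟨⟨1, fun i => i.elim0⟩⟩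

lemma matching_card : ∀ m : ℕ, Nat.card (Matching (2 * m)) = Nat.doubleFactorial (2 * m - 1)
  | 0 => matching_zero_card
  | (m+1) => by
      have h : 2 * (m + 1) = (2 * m) + 2 := by ring
      rw [h]
      rw [Nat.card_congr (matchingEquiv (k := 2 * m)), Nat.card_prod, Nat.card_eq_fintype_card,
        Fintype.card_fin, matching_card m]
      have h2 : 2 * m + 2 - 1 = 2 * m + 1 := by omega
      rw [h2]
      cases m with
      | zero => decide
      | succ j =>
          have h3 : 2 * (j + 1) + 1 = (2 * (j+1) - 1) + 2 := by omega
          rw [h3, Nat.doubleFactorial_add_two]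

end MatchingCount

/-- Labelled binary trees with `n ≥ 2` leaves are in bijection with perfect matchings of
`{1,…,2n-2}`; in particular there are `(2n-3)!!` of them. -/
theorem labTree_equiv_matching (n : ℕ) (hn : 2 ≤ n) :
    Nonempty (LabTree n ≃ Matching (2 * n - 2)) ∧
      Nat.card (LabTree n) = Nat.doubleFactorial (2 * n - 3) := by
  obtain ⟨hfin, hcard⟩ := labTree_card n (by omega)
  haveI := hfin
  have hm : 2 * n - 2 = 2 * (n - 1) := by omega
  have hmc : Nat.card (Matching (2 * n - 2)) = Nat.doubleFactorial (2 * n - 3) := by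
    rw [hm, MatchingCount.matching_card (n-1)]
    congr 1
    omega
  refine ⟨?_, hcard⟩
  haveI : Fintype (LabTree n) := Fintype.ofFinite _
  haveI : Fintype (Matching (2*n-2)) := Fintype.ofFinite _
  have hcc : Fintype.card (LabTree n) = Fintype.card (Matching (2*n-2)) := by
    rw [← Nat.card_eq_fintype_card, ← Nat.card_eq_fintype_card, hcard, hmc]
  exact ⟨Fintype.equivOfCardEq hcc⟩
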